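/- For all real numbers M, x, N with 3 ≤ M ≤ x ≤ N, one has x·(log x − log M) ≤ (x − M)·log N. -/
import Mathlib

/-- For all real numbers `M, x, N` with `3 ≤ M ≤ x ≤ N`, one has
`x·(log x − log M) ≤ (x − M)·log N`. -/
theorem mul_log_sub_log_le (M x N : ℝ) (hM : 3 ≤ M) (hMx : M ≤ x) (hxN : x ≤ N) :
    x * (Real.log x - Real.log M) ≤ (x - M) * Real.log N := by
  have hM0 : (0:ℝ) < M := by linarith
  have hx0 : (0:ℝ) < x := by linarith
  have he : Real.exp 1 ≤ M := by
    have := Real.exp_one_lt_d9; linarith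
  have key : Real.log x / x ≤ Real.log M / M :=
    Real.log_div_self_antitoneOn (by simpa using he) (by simp; linarith) hMx
  have h1 : M * Real.log x ≤ x * Real.log M := by
    rw [div_le_div_iff₀ hx0 hM0] at key; linarith
  have h2 : Real.log x ≤ Real.log N := Real.log_le_log hx0 hxN
  nlinarith [mul_nonneg (sub_nonneg.mpr hMx) (sub_nonneg.mpr h2)]
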